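/- Let H be a finite-dimensional Hopf algebra with basis (e_i) and dual basis (e^i). In the Heisenberg double H(H), the element T = Σ_i (ε ⊗ e_i) ⊗ (e^i ⊗ 1) is invertible in H(H) ⊗ H(H) with inverse T̄ = Σ_i (ε ⊗ S(e_i)) ⊗ (e^i ⊗ 1). -/

import Mathlib

open Coalgebra TensorProduct

namespace HeisenbergDouble

variable (K H : Type*) [Field K] [Ring H] [HopfAlgebra K H] [FiniteDimensional K H]

/-- The convolution product on the dual `H* = Module.Dual K H`, as a bilinear map:
`(f · g) x = f x₍₁₎ * g x₍₂₎`. -/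
noncomputable def dmulB : Module.Dual K H →ₗ[K] Module.Dual K H →ₗ[K] Module.Dual K H :=
  LinearMap.mk₂ K
    (fun f g => LinearMap.mul' K K ∘ₗ TensorProduct.map f g ∘ₗ Coalgebra.comul (R := K))
    (fun f f' g => by rw [TensorProduct.map_add_left, LinearMap.add_comp, LinearMap.comp_add])
    (fun c f g => by rw [TensorProduct.map_smul_left, LinearMap.smul_comp, LinearMap.comp_smul])
    (fun f g g' => by rw [TensorProduct.map_add_right, LinearMap.add_comp, LinearMap.comp_add])
    (fun c f g => by rw [TensorProduct.map_smul_right, LinearMap.smul_comp, LinearMap.comp_smul])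

/-- The left action of `H` on `H*` given by `(a ⇀ g) x = g (x * a)`, as a bilinear map. -/
noncomputable def actB : H →ₗ[K] Module.Dual K H →ₗ[K] Module.Dual K H :=
  LinearMap.mk₂ K (fun a g => g ∘ₗ LinearMap.mulRight K a)
    (fun a a' g => by ext x; simp [mul_add])
    (fun c a g => by ext x; simp [mul_smul_comm])
    (fun a g g' => by ext x; simp)
    (fun c a g => by ext x; simp)

/-- The underlying vector space `H* ⊗ H` of the Heisenberg double. -/
abbrev D := Module.Dual K H ⊗[K] H

/-- The multiplication of the Heisenberg double, as a linear map on `D ⊗ D`, implementing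
`(f ⊗ a) · (g ⊗ b) = f · (a₍₁₎ ⇀ g) ⊗ a₍₂₎ * b`. -/
noncomputable def hmulT : D K H ⊗[K] D K H →ₗ[K] D K H :=
  LinearMap.rTensor H
      (TensorProduct.lift (dmulB K H) ∘ₗ
        LinearMap.lTensor (Module.Dual K H) (TensorProduct.lift (actB K H)) ∘ₗ
        (TensorProduct.assoc K (Module.Dual K H) H (Module.Dual K H)).toLinearMap) ∘ₗ
    LinearMap.lTensor ((Module.Dual K H ⊗[K] H) ⊗[K] Module.Dual K H) (LinearMap.mul' K H) ∘ₗ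
    (TensorProduct.tensorTensorTensorComm K (Module.Dual K H ⊗[K] H) H
        (Module.Dual K H) H).toLinearMap ∘ₗ
    LinearMap.rTensor (Module.Dual K H ⊗[K] H)
      ((TensorProduct.assoc K (Module.Dual K H) H H).symm.toLinearMap ∘ₗ
        LinearMap.lTensor (Module.Dual K H) (Coalgebra.comul (R := K)))

/-- The product of two elements of the Heisenberg double. -/
noncomputable def hmul (x y : D K H) : D K H := hmulT K H (x ⊗ₜ y)

/-- The unit `ε ⊗ 1` of the Heisenberg double. -/
noncomputable def hunit : D K H := (Coalgebra.counit (R := K) (A := H)) ⊗ₜ (1 : H)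

end HeisenbergDouble

namespace HeisenbergDouble

variable (K H : Type*) [Field K] [Ring H] [HopfAlgebra K H] [FiniteDimensional K H]

/-- The componentwise multiplication on `H(H) ⊗ H(H)`. -/
noncomputable def hmul2 (x y : D K H ⊗[K] D K H) : D K H ⊗[K] D K H :=
  (TensorProduct.map (hmulT K H) (hmulT K H) ∘ₗ
    (TensorProduct.tensorTensorTensorComm K (D K H) (D K H) (D K H) (D K H)).toLinearMap)
    (x ⊗ₜ y)

end HeisenbergDouble
open Coalgebra TensorProduct
namespace HeisenbergDouble
variable (K H : Type*) [Field K] [Ring H] [HopfAlgebra K H] [FiniteDimensional K H]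

set_option synthInstance.maxHeartbeats 800000 in
set_option maxHeartbeats 1600000 in
lemma hmulT_tmul (f g : Module.Dual K H) (a b : H) :
    hmulT K H ((f ⊗ₜ a) ⊗ₜ (g ⊗ₜ b)) =
      TensorProduct.map (dmulB K H f ∘ₗ (actB K H).flip g) (LinearMap.mulRight K b)
        (Coalgebra.comul (R := K) a) := by
  rw [hmulT]
  simp only [LinearMap.comp_apply, LinearMap.rTensor_tmul, LinearEquiv.coe_coe,
    LinearMap.lTensor_tmul]
  generalize (Coalgebra.comul (R := K) a) = t
  induction t using TensorProduct.induction_on with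
  | zero => simp
  | tmul x y =>
    simp [tensorTensorTensorComm_tmul, dmulB, actB, lift.tmul]
  | add s t hs ht =>
    simp only [tmul_add, add_tmul, map_add, hs, ht]

end HeisenbergDouble
open Coalgebra TensorProduct
namespace HeisenbergDouble
variable (K H : Type*) [Field K] [Ring H] [HopfAlgebra K H] [FiniteDimensional K H]
set_option linter.unusedSectionVars false
set_option synthInstance.maxHeartbeats 800000
set_option maxHeartbeats 1600000

lemma dmulB_counit_left (h : Module.Dual K H) : dmulB K H (Coalgebra.counit (R := K)) h = h := by
  ext y
  simp only [dmulB, LinearMap.mk₂_apply, LinearMap.comp_apply]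
  rw [← LinearMap.lTensor_comp_rTensor, LinearMap.comp_apply, rTensor_counit_comul]
  simp

lemma actB_counit (x : H) :
    actB K H x (Coalgebra.counit (R := K)) = Coalgebra.counit (R := K) x • Coalgebra.counit (R := K) := by
  ext y
  simp [actB, Bialgebra.counit_mul, mul_comm]

lemma hmulT_counit (a c : H) :
    hmulT K H (((Coalgebra.counit (R := K) (A := H)) ⊗ₜ a) ⊗ₜ ((Coalgebra.counit (R := K) (A := H)) ⊗ₜ c)) =
      (Coalgebra.counit (R := K) (A := H)) ⊗ₜ (a * c) := by
  rw [hmulT_tmul]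
  have h1 : (dmulB K H (Coalgebra.counit (R := K)) ∘ₗ (actB K H).flip (Coalgebra.counit (R := K)))
      = (Coalgebra.counit (R := K) (A := H)).smulRight (Coalgebra.counit (R := K) (A := H)) := by
    ext x
    simp [actB_counit, dmulB_counit_left]
  rw [h1]
  have h2 : TensorProduct.map
        ((Coalgebra.counit (R := K) (A := H)).smulRight (Coalgebra.counit (R := K) (A := H)))
        (LinearMap.mulRight K c) =
      (TensorProduct.mk K (Module.Dual K H) H (Coalgebra.counit (R := K))) ∘ₗ
        LinearMap.mulRight K c ∘ₗ (TensorProduct.lid K H).toLinearMap ∘ₗ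
        LinearMap.rTensor H (Coalgebra.counit (R := K)) := by
    apply TensorProduct.ext'
    intro x y
    simp only [TensorProduct.map_tmul, LinearMap.smulRight_apply, LinearMap.comp_apply,
      LinearMap.rTensor_tmul, TensorProduct.lid_tmul, LinearEquiv.coe_coe,
      TensorProduct.mk_apply, LinearMap.mulRight_apply, TensorProduct.smul_tmul,
      smul_mul_assoc]
  rw [h2]
  simp only [LinearMap.comp_apply, rTensor_counit_comul, LinearEquiv.coe_coe, TensorProduct.lid_tmul,
    one_smul, LinearMap.mulRight_apply, mk_apply]

lemma hmulT_one (f g : Module.Dual K H) :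
    hmulT K H ((f ⊗ₜ (1 : H)) ⊗ₜ (g ⊗ₜ (1 : H))) = (dmulB K H f g) ⊗ₜ (1 : H) := by
  rw [hmulT_tmul]
  have : Coalgebra.comul (R := K) (1 : H) = (1 : H) ⊗ₜ[K] (1 : H) := by
    rw [Bialgebra.comul_one, Algebra.TensorProduct.one_def]
  rw [this]
  simp only [TensorProduct.map_tmul, LinearMap.comp_apply, LinearMap.flip_apply, LinearMap.mulRight_apply,
    mul_one, one_mul]
  congr 2
  ext y
  simp [actB]

end HeisenbergDouble
namespace HeisenbergDouble
variable (K H : Type*) [Field K] [Ring H] [HopfAlgebra K H] [FiniteDimensional K H]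
set_option linter.unusedSectionVars false
set_option synthInstance.maxHeartbeats 800000
set_option maxHeartbeats 1600000

lemma contraction_eq {ι : Type*} [Fintype ι] (b : Module.Basis ι K H) (F : H →ₗ[K] H) :
    (∑ i, ∑ j, LinearMap.toSpanSingleton K H (b i * F (b j)) ∘ₗ
        LinearMap.mul' K K ∘ₗ TensorProduct.map (b.coord i) (b.coord j)) =
      LinearMap.mul' K H ∘ₗ LinearMap.lTensor H F := by
  apply TensorProduct.ext'
  intro x z
  simp only [LinearMap.sum_apply, LinearMap.comp_apply, TensorProduct.map_tmul,
    LinearMap.mul'_apply, LinearMap.toSpanSingleton_apply, LinearMap.lTensor_tmul,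
    smul_mul_smul_comm]
  calc ∑ i, ∑ j, (b.coord i x * b.coord j z) • (b i * F (b j))
      = ∑ i, ∑ j, (b.coord i x • b i) * (b.coord j z • F (b j)) := by
        refine Finset.sum_congr rfl fun i _ => Finset.sum_congr rfl fun j _ => ?_
        rw [smul_mul_smul_comm]
    _ = (∑ i, b.coord i x • b i) * (∑ j, b.coord j z • F (b j)) := by
        rw [Finset.sum_mul_sum]
    _ = x * F z := by
        simp only [Module.Basis.coord_apply, ← map_smul, ← map_sum, Module.Basis.sum_repr]

lemma contraction_eq' {ι : Type*} [Fintype ι] (b : Module.Basis ι K H) (F : H →ₗ[K] H) :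
    (∑ i, ∑ j, LinearMap.toSpanSingleton K H (F (b i) * b j) ∘ₗ
        LinearMap.mul' K K ∘ₗ TensorProduct.map (b.coord i) (b.coord j)) =
      LinearMap.mul' K H ∘ₗ LinearMap.rTensor H F := by
  apply TensorProduct.ext'
  intro x z
  simp only [LinearMap.sum_apply, LinearMap.comp_apply, TensorProduct.map_tmul,
    LinearMap.mul'_apply, LinearMap.toSpanSingleton_apply, LinearMap.rTensor_tmul]
  calc ∑ i, ∑ j, (b.coord i x * b.coord j z) • (F (b i) * b j)
      = ∑ i, ∑ j, (b.coord i x • F (b i)) * (b.coord j z • b j) := by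
        refine Finset.sum_congr rfl fun i _ => Finset.sum_congr rfl fun j _ => ?_
        rw [smul_mul_smul_comm]
    _ = (∑ i, b.coord i x • F (b i)) * (∑ j, b.coord j z • b j) := by
        rw [Finset.sum_mul_sum]
    _ = F x * z := by
        simp only [Module.Basis.coord_apply, ← map_smul, ← map_sum, Module.Basis.sum_repr]

lemma key_identity1 {ι : Type*} [Fintype ι] (b : Module.Basis ι K H) :
    ∑ i, ∑ j, (b i * HopfAlgebra.antipode (R := K) (b j)) ⊗ₜ[K] dmulB K H (b.coord i) (b.coord j)
      = (1 : H) ⊗ₜ[K] (Coalgebra.counit (R := K) (A := H)) := by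
  classical
  apply (TensorProduct.comm K H (Module.Dual K H)).injective
  apply (dualTensorHomEquivOfBasis (N := H) b).injective
  rw [dualTensorHomEquivOfBasis_apply, dualTensorHomEquivOfBasis_apply]
  ext y
  simp only [map_sum, comm_tmul, LinearMap.coe_sum, Finset.sum_apply,
    dualTensorHom_apply, LinearMap.sum_apply]
  calc ∑ i, ∑ j, dmulB K H (b.coord i) (b.coord j) y • (b i * HopfAlgebra.antipode (R := K) (b j))
      = (∑ i, ∑ j, LinearMap.toSpanSingleton K H (b i * HopfAlgebra.antipode (R := K) (b j)) ∘ₗ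
          LinearMap.mul' K K ∘ₗ TensorProduct.map (b.coord i) (b.coord j))
          (Coalgebra.comul (R := K) y) := by
        simp only [LinearMap.sum_apply, LinearMap.comp_apply,
          LinearMap.toSpanSingleton_apply]
        rfl
    _ = LinearMap.mul' K H (LinearMap.lTensor H (HopfAlgebra.antipode (R := K))
          (Coalgebra.comul (R := K) y)) := by
        rw [contraction_eq]; rfl
    _ = (Coalgebra.counit (R := K) y) • (1 : H) := by
        rw [HopfAlgebra.mul_antipode_lTensor_comul_apply, Algebra.algebraMap_eq_smul_one]

lemma key_identity2 {ι : Type*} [Fintype ι] (b : Module.Basis ι K H) :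
    ∑ i, ∑ j, (HopfAlgebra.antipode (R := K) (b i) * b j) ⊗ₜ[K] dmulB K H (b.coord i) (b.coord j)
      = (1 : H) ⊗ₜ[K] (Coalgebra.counit (R := K) (A := H)) := by
  classical
  apply (TensorProduct.comm K H (Module.Dual K H)).injective
  apply (dualTensorHomEquivOfBasis (N := H) b).injective
  rw [dualTensorHomEquivOfBasis_apply, dualTensorHomEquivOfBasis_apply]
  ext y
  simp only [map_sum, comm_tmul, LinearMap.coe_sum, Finset.sum_apply,
    dualTensorHom_apply, LinearMap.sum_apply]
  calc ∑ i, ∑ j, dmulB K H (b.coord i) (b.coord j) y • (HopfAlgebra.antipode (R := K) (b i) * b j)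
      = (∑ i, ∑ j, LinearMap.toSpanSingleton K H (HopfAlgebra.antipode (R := K) (b i) * b j) ∘ₗ
          LinearMap.mul' K K ∘ₗ TensorProduct.map (b.coord i) (b.coord j))
          (Coalgebra.comul (R := K) y) := by
        simp only [LinearMap.sum_apply, LinearMap.comp_apply,
          LinearMap.toSpanSingleton_apply]
        rfl
    _ = LinearMap.mul' K H (LinearMap.rTensor H (HopfAlgebra.antipode (R := K))
          (Coalgebra.comul (R := K) y)) := by
        rw [contraction_eq']; rfl
    _ = (Coalgebra.counit (R := K) y) • (1 : H) := by
        rw [HopfAlgebra.mul_antipode_rTensor_comul_apply, Algebra.algebraMap_eq_smul_one]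

end HeisenbergDouble

open HeisenbergDouble in
set_option synthInstance.maxHeartbeats 800000 in
set_option maxHeartbeats 1600000 in
/-- The canonical element `T = Σᵢ (ε ⊗ eᵢ) ⊗ (eⁱ ⊗ 1)` of the Heisenberg double of a
finite-dimensional Hopf algebra is invertible in `H(H) ⊗ H(H)` with inverse
`T̄ = Σᵢ (ε ⊗ S eᵢ) ⊗ (eⁱ ⊗ 1)`. -/
theorem canonical_element_invertible
    (K H : Type*) [Field K] [Ring H] [HopfAlgebra K H] [FiniteDimensional K H]
    (ι : Type*) [Fintype ι] (b : Module.Basis ι K H) :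
    hmul2 K H
        (∑ i, (((Coalgebra.counit (R := K) (A := H) ⊗ₜ b i) : D K H) ⊗ₜ
          (((b.coord i : Module.Dual K H) ⊗ₜ (1 : H)) : D K H)))
        (∑ i, (((Coalgebra.counit (R := K) (A := H) ⊗ₜ
            HopfAlgebra.antipode (R := K) (A := H) (b i)) : D K H) ⊗ₜ
          (((b.coord i : Module.Dual K H) ⊗ₜ (1 : H)) : D K H))) =
      hunit K H ⊗ₜ hunit K H ∧
    hmul2 K H
        (∑ i, (((Coalgebra.counit (R := K) (A := H) ⊗ₜ
            HopfAlgebra.antipode (R := K) (A := H) (b i)) : D K H) ⊗ₜ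
          (((b.coord i : Module.Dual K H) ⊗ₜ (1 : H)) : D K H)))
        (∑ i, (((Coalgebra.counit (R := K) (A := H) ⊗ₜ b i) : D K H) ⊗ₜ
          (((b.coord i : Module.Dual K H) ⊗ₜ (1 : H)) : D K H))) =
      hunit K H ⊗ₜ hunit K H := by
  set P : H ⊗[K] Module.Dual K H →ₗ[K] D K H ⊗[K] D K H :=
    TensorProduct.map
      (TensorProduct.mk K (Module.Dual K H) H (Coalgebra.counit (R := K)))
      ((TensorProduct.mk K (Module.Dual K H) H).flip 1) with hPdef
  have hP : ∀ (x : H) (f : Module.Dual K H),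
      P (x ⊗ₜ f) = ((Coalgebra.counit (R := K) (A := H)) ⊗ₜ x) ⊗ₜ (f ⊗ₜ (1 : H)) := by
    intro x f
    simp [hPdef, TensorProduct.map_tmul]
  have hu : hunit K H ⊗ₜ[K] hunit K H =
      P ((1 : H) ⊗ₜ (Coalgebra.counit (R := K) (A := H))) := by
    rw [hP]; rfl
  constructor
  · calc hmul2 K H _ _
        = ∑ i, ∑ j,
            hmulT K H (((Coalgebra.counit (R := K) (A := H)) ⊗ₜ b i) ⊗ₜ
              ((Coalgebra.counit (R := K) (A := H)) ⊗ₜ HopfAlgebra.antipode (R := K) (b j))) ⊗ₜ[K]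
            hmulT K H (((b.coord i : Module.Dual K H) ⊗ₜ (1 : H)) ⊗ₜ
              ((b.coord j : Module.Dual K H) ⊗ₜ (1 : H))) := by
          simp only [hmul2, sum_tmul, tmul_sum, map_sum, LinearMap.comp_apply,
            LinearEquiv.coe_coe, tensorTensorTensorComm_tmul, TensorProduct.map_tmul]
          rw [Finset.sum_comm]
      _ = P (∑ i, ∑ j, (b i * HopfAlgebra.antipode (R := K) (b j)) ⊗ₜ[K]
            dmulB K H (b.coord i) (b.coord j)) := by
          simp only [hmulT_counit, hmulT_one, map_sum, hP]
      _ = hunit K H ⊗ₜ[K] hunit K H := by rw [key_identity1, ← hu]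
  · calc hmul2 K H _ _
        = ∑ i, ∑ j,
            hmulT K H (((Coalgebra.counit (R := K) (A := H)) ⊗ₜ HopfAlgebra.antipode (R := K) (b i)) ⊗ₜ
              ((Coalgebra.counit (R := K) (A := H)) ⊗ₜ b j)) ⊗ₜ[K]
            hmulT K H (((b.coord i : Module.Dual K H) ⊗ₜ (1 : H)) ⊗ₜ
              ((b.coord j : Module.Dual K H) ⊗ₜ (1 : H))) := by
          simp only [hmul2, sum_tmul, tmul_sum, map_sum, LinearMap.comp_apply,
            LinearEquiv.coe_coe, tensorTensorTensorComm_tmul, TensorProduct.map_tmul]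
          rw [Finset.sum_comm]
      _ = P (∑ i, ∑ j, (HopfAlgebra.antipode (R := K) (b i) * b j) ⊗ₜ[K]
            dmulB K H (b.coord i) (b.coord j)) := by
          simp only [hmulT_counit, hmulT_one, map_sum, hP]
      _ = hunit K H ⊗ₜ[K] hunit K H := by rw [key_identity2, ← hu]
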